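/- Let ABC be an ideal hyperbolic triangle whose ideal vertices are decorated by horocycles, with signed side lengths a, b, c (lengths of sides BC, CA, AB measured between the horocycles, negative if the horocycles intersect), and let α_A be the length of the arc of the horocycle at A contained in the triangle. Then α_A² = e^{a−b−c}. -/
import Mathlib


/-- The Minkowski bilinear form on `ℝ^{1,2}`. -/
def mink (x y : Fin 3 → ℝ) : ℝ := -(x 0 * y 0) + x 1 * y 1 + x 2 * y 2

lemma mink_symm (x y : Fin 3 → ℝ) : mink x y = mink y x := by
  simp [mink]; ring

lemma mink_left (μ ν : ℝ) (x y z : Fin 3 → ℝ) :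
    mink (μ • x + ν • y) z = μ * mink x z + ν * mink y z := by
  simp [mink, Pi.add_apply, Pi.smul_apply, smul_eq_mul]; ring

lemma mink_right (μ ν : ℝ) (x y z : Fin 3 → ℝ) :
    mink z (μ • x + ν • y) = μ * mink z x + ν * mink z y := by
  simp [mink, Pi.add_apply, Pi.smul_apply, smul_eq_mul]; ring

/-- Penner's relation for a decorated ideal hyperbolic triangle, in the hyperboloid model.
The vertices are represented by future light-like vectors `lA, lB, lC` (the polar vectors of
the decorating horocycles), the signed side lengths `a, b, c` are given by
`⟨l, l'⟩ = -2 e^{dist}`, the points `p, q` are the intersections of the horocycle at `A` with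
the sides `AB`, `AC`, and `αA ≥ 0` is the horocyclic arc length between them, characterized by
`⟨p, q⟩ = -1 - αA²/2`.  Then `αA² = e^{a-b-c}`. -/
theorem ideal_triangle_horocyclic_arc
    (lA lB lC p q : Fin 3 → ℝ) (a b c αA : ℝ)
    (hlA : mink lA lA = 0) (hlA0 : 0 < lA 0)
    (hlB : mink lB lB = 0) (hlB0 : 0 < lB 0)
    (hlC : mink lC lC = 0) (hlC0 : 0 < lC 0)
    (hABind : ¬ ∃ t : ℝ, lB = t • lA)
    (hACind : ¬ ∃ t : ℝ, lC = t • lA)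
    (ha : mink lB lC = -2 * Real.exp a)
    (hb : mink lA lC = -2 * Real.exp b)
    (hc : mink lA lB = -2 * Real.exp c)
    (hp : mink p p = -1) (hp0 : 0 < p 0) (hpA : mink p lA = -1)
    (hpAB : ∃ μ ν : ℝ, p = μ • lA + ν • lB)
    (hq : mink q q = -1) (hq0 : 0 < q 0) (hqA : mink q lA = -1)
    (hqAC : ∃ μ ν : ℝ, q = μ • lA + ν • lC)
    (hα : 0 ≤ αA) (harc : mink p q = -1 - αA ^ 2 / 2) :
    αA ^ 2 = Real.exp (a - b - c) := by
  obtain ⟨μ, ν, rfl⟩ := hpAB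
  obtain ⟨μ', ν', rfl⟩ := hqAC
  rw [mink_left, hlA, mink_symm lB lA, hc] at hpA
  rw [mink_left, hlA, mink_symm lC lA, hb] at hqA
  rw [mink_left, mink_right, mink_right, hlA, mink_symm lB lA, hc, hlB] at hp
  rw [mink_left, mink_right, mink_right, hlA, mink_symm lC lA, hb, hlC] at hq
  rw [mink_left, mink_right, mink_right, hlA, mink_symm lB lA, hc, hb, ha] at harc
  have h1 : ν * Real.exp c = 1 / 2 := by linear_combination (-(1 : ℝ)/2) * hpA
  have h2 : ν' * Real.exp b = 1 / 2 := by linear_combination (-(1 : ℝ)/2) * hqA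
  have h3 : μ = 1 / 2 := by linear_combination (-(1 : ℝ)/2) * hp + μ * hpA
  have h4 : μ' = 1 / 2 := by linear_combination (-(1 : ℝ)/2) * hq + μ' * hqA
  rw [h3] at harc
  rw [h4] at harc
  have h6 : ν * ν' * Real.exp a = αA ^ 2 / 4 := by
    linear_combination (-(1 : ℝ)/2) * harc - (1/2) * h1 - (1/2) * h2
  have h7 : αA ^ 2 * (Real.exp b * Real.exp c) = Real.exp a := by
    linear_combination (-4 * Real.exp b * Real.exp c) * h6
      + (4 * Real.exp a * Real.exp c * ν) * h2 + (2 * Real.exp a) * h1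
  rw [Real.exp_sub, Real.exp_sub, eq_div_iff (Real.exp_pos c).ne', eq_div_iff (Real.exp_pos b).ne']
  linear_combination h7
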